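/- Let u be a complex number and v̄ = (v_1,…,v_b) a tuple of complex numbers such that u, v_1, …, v_b are pairwise distinct and generic (all denominators below nonzero). Then the ordinary commutator satisfies [T_{12}(u), 𝕋_{23}(v̄)] = Σ_{k=1}^{b} g(u, v_k)·g(v̄_k, v_k)·( T_{13}(u)·𝕋_{23}(v̄_k)·T_{22}(v_k) − T_{13}(v_k)·𝕋_{23}(v̄_k)·T_{22}(u) ), where v̄_k = v̄ ∖ {v_k}. -/

import Mathlib

open scoped BigOperators

/-- The rational function `g(x,y) = c/(x-y)`. -/
noncomputable def gG (c x y : ℂ) : ℂ := c / (x - y)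

/-- The rational function `f(x,y) = (x-y+c)/(x-y)`. -/
noncomputable def fF (c x y : ℂ) : ℂ := (x - y + c) / (x - y)

/-- The rational function `h(x,y) = (x-y+c)/c`. -/
noncomputable def hH (c x y : ℂ) : ℂ := (x - y + c) / c

/-- A two-argument function applied to tuples denotes the product over all elements. -/
noncomputable def pF (F : ℂ → ℂ → ℂ) (U V : List ℂ) : ℂ :=
  (U.map fun x => (V.map fun y => F x y).prod).prod

/-- The domain-wall partition function `K(ū|v̄) = Δ'(ū)·Δ(v̄)·h(ū,v̄)·det(g(u_j,v_k)/h(u_j,v_k))`,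
written in the equivalent (rational-continuation) form in which the prefactor `h(ū,v̄)` is
distributed over the rows of the determinant:
`K(ū|v̄) = Δ'(ū)·Δ(v̄)·det( g(u_j,v_k)·∏_{k'≠k} h(u_j,v_{k'}) )`.
For tuples of equal length `n` with all denominators nonzero this coincides with the literal
formula, and `K(∅|∅) = 1`. -/
noncomputable def Kd (c : ℂ) (U V : List ℂ) : ℂ :=
  (∏ j : Fin U.length, ∏ k : Fin U.length,
      if (j : ℕ) < (k : ℕ) then gG c (U.get j) (U.get k) else 1) *
  (∏ j : Fin V.length, ∏ k : Fin V.length,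
      if (k : ℕ) < (j : ℕ) then gG c (V.get j) (V.get k) else 1) *
  Matrix.det (Matrix.of fun j k : Fin U.length =>
    gG c (U.get j) (V.getD (k : ℕ) 0) *
      ∏ k' : Fin U.length, if k' = k then 1 else hH c (U.get j) (V.getD (k' : ℕ) 0))

/-- The sub-tuple of a tuple `L` selected by a set `A` of positions (in increasing order). -/
noncomputable def subL (L : List ℂ) (A : Finset (Fin L.length)) : List ℂ :=
  (A.sort (· ≤ ·)).map L.get

/-- Genericity of a family of parameters: all members are pairwise distinct and no difference
of two members equals `±c`, so that every denominator occurring (also after shifts by `±c`)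
is nonzero. -/
def Generic (c : ℂ) (L : List ℂ) : Prop :=
  L.Pairwise fun x y => x ≠ y ∧ x - y ≠ c ∧ x - y ≠ -c

/-- Product of (commuting, even) operators over a tuple of spectral parameters. -/
noncomputable def Tl {R : Type*} [Ring R] (T : ℂ → R) (L : List ℂ) : R := (L.map T).prod

/-- Symmetrized product of odd operators from the third column:
`𝕋(v̄) = T(v_1)⋯T(v_n) / ∏_{l>m} h(v_l,v_m)`. -/
noncomputable def TTc {R : Type*} [Ring R] [Module ℂ R] (c : ℂ) (T : ℂ → R) (L : List ℂ) : R :=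
  (∏ l : Fin L.length, ∏ m : Fin L.length,
      if (m : ℕ) < (l : ℕ) then hH c (L.get l) (L.get m) else 1)⁻¹ • (L.map T).prod

/-- Symmetrized product of odd operators from the third row:
`𝕋(v̄) = T(v_1)⋯T(v_n) / ∏_{l>m} h(v_m,v_l)`. -/
noncomputable def TTr {R : Type*} [Ring R] [Module ℂ R] (c : ℂ) (T : ℂ → R) (L : List ℂ) : R :=
  (∏ l : Fin L.length, ∏ m : Fin L.length,
      if (m : ℕ) < (l : ℕ) then hH c (L.get m) (L.get l) else 1)⁻¹ • (L.map T).prod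

/-- ℤ₂-parity of the `gl(2|1)` indices: `[1]=[2]=0`, `[3]=1`
(indices `0,1,2 : Fin 3` encode `1,2,3`). -/
def parG : Fin 3 → ℕ := fun i => if i = 2 then 1 else 0

/-- The `gl(2|1)` graded RTT commutation relations for the entries of the monodromy matrix. -/
def RTTrel {R : Type*} [Ring R] [Module ℂ R] (c : ℂ) (T : Fin 3 → Fin 3 → ℂ → R) : Prop :=
  ∀ u v : ℂ, u ≠ v → ∀ i j k l : Fin 3,
    T i j u * T k l v - ((-1 : ℂ) ^ ((parG i + parG j) * (parG k + parG l))) • (T k l v * T i j u)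
      = (((-1 : ℂ) ^ (parG i * (parG k + parG l) + parG k * parG l)) * gG c u v) •
          (T k j v * T i l u - T k j u * T i l v)


namespace S18

noncomputable def hPl (c : ℂ) (L : List ℂ) (z : ℂ) : ℂ := (L.map fun x => hH c x z).prod
noncomputable def gPl (c : ℂ) (L : List ℂ) (z : ℂ) : ℂ := (L.map fun x => gG c x z).prod
noncomputable def fPl (c : ℂ) (L : List ℂ) (z : ℂ) : ℂ := (L.map fun x => fF c x z).prod

noncomputable def HHs (c : ℂ) : List ℂ → ℂ
  | [] => 1
  | (a :: L) => hPl c L a * HHs c L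

lemma prod_map_fin (f : ℂ → ℂ) (L : List ℂ) :
    (L.map f).prod = ∏ i : Fin L.length, f (L.get i) := by
  conv_lhs => rw [← List.ofFn_get L]
  rw [List.map_ofFn, List.prod_ofFn]
  rfl

lemma prefactor_eq (c : ℂ) : ∀ L : List ℂ,
    (∏ l : Fin L.length, ∏ m : Fin L.length,
      if (m : ℕ) < (l : ℕ) then hH c (L.get l) (L.get m) else 1) = HHs c L
  | [] => by simp [HHs]
  | (a :: L) => by
      show (∏ l : Fin (L.length+1), ∏ m : Fin (L.length+1),
        if (m : ℕ) < (l : ℕ) then hH c ((a::L).get l) ((a::L).get m) else 1) = _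
      rw [Fin.prod_univ_succ]
      have h0 : (∏ m : Fin (L.length+1),
          if (m : ℕ) < (((0 : Fin (L.length+1))) : ℕ) then hH c ((a::L).get (0 : Fin (L.length+1))) ((a::L).get m) else 1) = 1 := by
        simp
      rw [h0, one_mul]
      have h1 : ∀ i : Fin L.length, (∏ m : Fin (L.length+1),
          if (m : ℕ) < ((i.succ : Fin (L.length+1)) : ℕ) then hH c ((a::L).get i.succ) ((a::L).get m) else 1)
          = hH c (L.get i) a * ∏ m : Fin L.length,
              if (m : ℕ) < (i : ℕ) then hH c (L.get i) (L.get m) else 1 := by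
        intro i
        rw [Fin.prod_univ_succ]
        simp [Nat.succ_lt_succ_iff]
      simp only [h1]
      rw [Finset.prod_mul_distrib, prefactor_eq c L]
      show _ = (L.map fun x => hH c x a).prod * HHs c L
      rw [prod_map_fin]

lemma TTc_def' {R : Type*} [Ring R] [Module ℂ R] (c : ℂ) (T : ℂ → R) (L : List ℂ) :
    TTc c T L = (HHs c L)⁻¹ • (L.map T).prod := by
  rw [TTc, prefactor_eq]

lemma TTc_nil {R : Type*} [Ring R] [Module ℂ R] (c : ℂ) (T : ℂ → R) :
    TTc c T [] = 1 := by simp [TTc_def', HHs]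

lemma TTc_cons {R : Type*} [Ring R] [Algebra ℂ R] (c : ℂ) (T : ℂ → R) (a : ℂ) (L : List ℂ) :
    TTc c T (a :: L) = (hPl c L a)⁻¹ • (T a * TTc c T L) := by
  rw [TTc_def', TTc_def', HHs, List.map_cons, List.prod_cons, mul_inv, mul_smul,
    mul_smul_comm]

lemma prod_map_eraseIdx (f : ℂ → ℂ) : ∀ (L : List ℂ) (k : ℕ) (hk : k < L.length),
    (L.map f).prod = f (L.get ⟨k, hk⟩) * ((L.eraseIdx k).map f).prod
  | (a :: L), 0, _ => by simp
  | (a :: L), (k+1), hk => by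
      have hk' : k < L.length := Nat.succ_lt_succ_iff.mp hk
      simp only [List.map_cons, List.prod_cons, List.eraseIdx_cons_succ, List.get_cons_succ]
      rw [prod_map_eraseIdx f L k hk', mul_left_comm]

lemma prod_map_mul' (f g : ℂ → ℂ) (L : List ℂ) :
    (L.map fun x => f x * g x).prod = (L.map f).prod * (L.map g).prod := by
  induction L with
  | nil => simp
  | cons a L ih => simp [ih]; ring

lemma hPl_ne_zero0 {c : ℂ} (hc : c ≠ 0) {L : List ℂ} {z : ℂ}
    (h : ∀ x ∈ L, x - z ≠ -c) : hPl c L z ≠ 0 := by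
  rw [hPl]
  apply List.prod_ne_zero
  intro h0
  rcases List.mem_map.mp h0 with ⟨x, hx, hfx⟩
  apply h x hx
  have : (x - z + c) / c = 0 := hfx.symm ▸ rfl
  rcases div_eq_zero_iff.mp this with h1 | h1
  · linear_combination h1
  · exact absurd h1 hc

lemma mul_TTc_cons {R : Type*} [Ring R] [Algebra ℂ R] {c : ℂ} (hc : c ≠ 0) (T : ℂ → R)
    {a : ℂ} {L : List ℂ} (h : ∀ x ∈ L, x - a ≠ -c) :
    T a * TTc c T L = hPl c L a • TTc c T (a :: L) := by
  rw [TTc_cons, smul_inv_smul₀ (hPl_ne_zero0 hc h)]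


def Ok (c x y : ℂ) : Prop := x ≠ y ∧ x - y ≠ c ∧ x - y ≠ -c

lemma Ok.symm' {c x y : ℂ} (h : Ok c x y) : Ok c y x := by
  obtain ⟨h1, h2, h3⟩ := h
  refine ⟨h1.symm, fun hh => h3 ?_, fun hh => h2 ?_⟩ <;> linear_combination -hh

lemma generic_cons {c a L} : Generic c (a :: L) ↔ (∀ x ∈ L, Ok c a x) ∧ Generic c L := by
  rw [Generic, List.pairwise_cons]; rfl

lemma Generic.of_sublist {c} {L L' : List ℂ} (hs : List.Sublist L' L) (h : Generic c L) : Generic c L' :=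
  List.Pairwise.sublist hs h

lemma hH_ne_zero {c x y : ℂ} (hc : c ≠ 0) (h : x - y ≠ -c) : hH c x y ≠ 0 := by
  rw [hH]
  apply div_ne_zero _ hc
  intro hz; exact h (by linear_combination hz)

lemma Ok.hne {c x y : ℂ} (hc : c ≠ 0) (h : Ok c x y) : hH c x y ≠ 0 :=
  hH_ne_zero hc h.2.2

lemma Ok.hne' {c x y : ℂ} (hc : c ≠ 0) (h : Ok c x y) : hH c y x ≠ 0 :=
  hH_ne_zero hc h.symm'.2.2

lemma hPl_ne_zero {c : ℂ} (hc : c ≠ 0) {L : List ℂ} {z : ℂ}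
    (h : ∀ x ∈ L, Ok c x z) : hPl c L z ≠ 0 := by
  rw [hPl]
  apply List.prod_ne_zero
  intro h0
  rcases List.mem_map.mp h0 with ⟨x, hx, hfx⟩
  exact (h x hx).hne hc hfx

section Op
variable {R : Type*} [Ring R] [Algebra ℂ R] {c : ℂ} {B : ℂ → R}

lemma TTc_swap (hc : c ≠ 0)
    (rBB : ∀ {x y : ℂ}, Ok c x y → hH c x y • (B x * B y) = hH c y x • (B y * B x))
    {a b : ℂ} {X : List ℂ} (hab : Ok c a b)
    (hX : ∀ x ∈ X, Ok c x a ∧ Ok c x b) :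
    TTc c B (a :: b :: X) = TTc c B (b :: a :: X) := by
  have hXa : ∀ x ∈ X, Ok c x a := fun x hx => (hX x hx).1
  have hXb : ∀ x ∈ X, Ok c x b := fun x hx => (hX x hx).2
  have eL : TTc c B (a :: b :: X)
      = (hH c b a * (hPl c X a * hPl c X b))⁻¹ • ((B a * B b) * TTc c B X) := by
    rw [TTc_cons, TTc_cons, mul_smul_comm, ← mul_assoc]
    rw [show hPl c (b :: X) a = hH c b a * hPl c X a by
      simp only [hPl, List.map_cons, List.prod_cons]]
    rw [smul_smul, ← mul_inv, mul_assoc]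
  have eR : TTc c B (b :: a :: X)
      = (hH c a b * (hPl c X b * hPl c X a))⁻¹ • ((B b * B a) * TTc c B X) := by
    rw [TTc_cons, TTc_cons, mul_smul_comm, ← mul_assoc]
    rw [show hPl c (a :: X) b = hH c a b * hPl c X b by
      simp only [hPl, List.map_cons, List.prod_cons]]
    rw [smul_smul, ← mul_inv, mul_assoc]
  rw [eL, eR]
  have key : (B a * B b) * TTc c B X = ((hH c a b)⁻¹ * hH c b a) • ((B b * B a) * TTc c B X) := by
    rw [mul_smul, eq_inv_smul_iff₀ (hab.hne hc), ← smul_mul_assoc, rBB hab, smul_mul_assoc]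
  rw [key, smul_smul]
  congr 1
  have h1 := hab.hne hc
  have h2 := hab.hne' hc
  have h3 := hPl_ne_zero hc hXa
  have h4 := hPl_ne_zero hc hXb
  field_simp

lemma generic_rot {c : ℂ} : ∀ (L : List ℂ) (k : ℕ) (hk : k < L.length), Generic c L →
    Generic c (L.get ⟨k, hk⟩ :: L.eraseIdx k)
  | (a :: L), 0, _, h => h
  | (a :: L), (k+1), hk, h => by
      have hk' : k < L.length := Nat.succ_lt_succ_iff.mp hk
      obtain ⟨ha, hL⟩ := generic_cons.mp h
      have ih := generic_rot L k hk' hL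
      obtain ⟨hz, hL'⟩ := generic_cons.mp ih
      simp only [List.get_cons_succ, List.eraseIdx_cons_succ]
      refine generic_cons.mpr ⟨?_, generic_cons.mpr ⟨?_, hL'⟩⟩
      · intro x hx
        rcases List.mem_cons.mp hx with rfl | hx'
        · exact (ha _ (List.get_mem L _)).symm'
        · exact hz x hx'
      · exact fun x hx => ha x ((List.eraseIdx_sublist L k).mem hx)

lemma TTc_rot (hc : c ≠ 0)
    (rBB : ∀ {x y : ℂ}, Ok c x y → hH c x y • (B x * B y) = hH c y x • (B y * B x)) : ∀ (L : List ℂ) (k : ℕ) (hk : k < L.length), Generic c L →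
    TTc c B (L.get ⟨k, hk⟩ :: L.eraseIdx k) = TTc c B L
  | (a :: L), 0, _, _ => rfl
  | (a :: L), (k+1), hk, h => by
      have hk' : k < L.length := Nat.succ_lt_succ_iff.mp hk
      obtain ⟨ha, hL⟩ := generic_cons.mp h
      have hrot := generic_rot L k hk' hL
      obtain ⟨hz, hL'⟩ := generic_cons.mp hrot
      simp only [List.get_cons_succ, List.eraseIdx_cons_succ]
      set z := L.get ⟨k, hk'⟩ with hzdef
      have hza : Ok c z a := (ha z (List.get_mem L _)).symm'
      have hblock : ∀ x ∈ L.eraseIdx k, Ok c x z ∧ Ok c x a := fun x hx =>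
        ⟨(hz x hx).symm', (ha x ((List.eraseIdx_sublist L k).mem hx)).symm'⟩
      rw [TTc_swap hc rBB hza hblock, TTc_cons, TTc_rot hc rBB L k hk' hL]
      rw [show hPl c (z :: L.eraseIdx k) a = hPl c L a by
        simp only [hPl, List.map_cons, List.prod_cons]
        rw [prod_map_eraseIdx (fun x => hH c x a) L k hk']]
      rw [← TTc_cons]

end Op

section Rel
variable {R : Type*} [Ring R] [Algebra ℂ R]
lemma gG_anti (c x y : ℂ) : gG c y x = -gG c x y := by
  rw [gG, gG, show y - x = -(x - y) by ring, div_neg]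

lemma fF_1g {c x y : ℂ} (h : x ≠ y) : fF c x y = 1 + gG c x y := by
  have h' : x - y ≠ 0 := sub_ne_zero.mpr h
  unfold fF gG
  field_simp

lemma fF_gh {c x y : ℂ} (hc : c ≠ 0) (h : x ≠ y) : fF c x y = gG c x y * hH c x y := by
  have h' : x - y ≠ 0 := sub_ne_zero.mpr h
  unfold fF gG hH
  field_simp

lemma parG0 : parG 0 = 0 := rfl
lemma parG1 : parG 1 = 0 := rfl
lemma parG2 : parG 2 = 1 := rfl

-- relation extraction
variable {c : ℂ} {T : Fin 3 → Fin 3 → ℂ → R}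

lemma relAB (hT : RTTrel c T) {u v : ℂ} (h : u ≠ v) :
    T 0 1 u * T 1 2 v = T 1 2 v * T 0 1 u
      + gG c u v • (T 0 2 u * T 1 1 v) - gG c u v • (T 0 2 v * T 1 1 u) := by
  have h0 := hT v u (Ne.symm h) 1 2 0 1
  norm_num [parG0, parG1, parG2] at h0
  rw [gG_anti c u v] at h0
  linear_combination (norm := module) -h0

lemma relDB (hT : RTTrel c T) {v y : ℂ} (h : v ≠ y) :
    T 1 1 y * T 1 2 v = fF c v y • (T 1 2 v * T 1 1 y) + gG c y v • (T 1 2 y * T 1 1 v) := by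
  have h0 := hT v y h 1 2 1 1
  norm_num [parG0, parG1, parG2] at h0
  rw [fF_1g h, gG_anti c v y]
  linear_combination (norm := module) -h0

lemma relBC (hT : RTTrel c T) {v x : ℂ} (h : v ≠ x) :
    T 1 2 v * T 0 2 x = gG c x v • (T 0 2 v * T 1 2 x) - fF c x v • (T 0 2 x * T 1 2 v) := by
  have h0 := hT v x h 1 2 0 2
  norm_num [parG0, parG1, parG2] at h0
  rw [gG_anti c x v] at h0
  rw [fF_1g (Ne.symm h)]
  linear_combination (norm := module) h0

lemma relBB (hT : RTTrel c T) (hc : c ≠ 0) {x y : ℂ} (h : x ≠ y) :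
    hH c x y • (T 1 2 x * T 1 2 y) = hH c y x • (T 1 2 y * T 1 2 x) := by
  have h0 := hT x y h 1 2 1 2
  norm_num [parG0, parG1, parG2] at h0
  have hxy : x - y ≠ 0 := sub_ne_zero.mpr h
  have e1 : hH c x y = (x - y) / c * gG c x y + (x - y) / c := by
    unfold hH gG
    field_simp; ring
  have e2 : hH c y x = (x - y) / c * gG c x y - (x - y) / c := by
    unfold hH gG
    field_simp; ring
  rw [e1, e2]
  linear_combination (norm := module) ((x - y) / c) • h0

end Rel

lemma I1 {c u v z : ℂ} (huv : u ≠ v) (huz : u ≠ z) (hvz : v ≠ z) :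
    gG c u v * gG c v z - gG c u z * fF c u v = hH c z v * gG c u z * gG c v z := by
  have h1 : u - v ≠ 0 := sub_ne_zero.mpr huv
  have h2 : u - z ≠ 0 := sub_ne_zero.mpr huz
  have h3 : v - z ≠ 0 := sub_ne_zero.mpr hvz
  rcases eq_or_ne c 0 with rfl | hc
  · simp [gG, fF, hH]
  · unfold gG fF hH
    field_simp
    ring
lemma gg_split {c x y z : ℂ} (hxy : x ≠ y) (hyz : y ≠ z) (hxz : x ≠ z) :
    gG c x y * gG c y z = gG c x z * (gG c x y + gG c y z) := by
  have h1 : x - y ≠ 0 := sub_ne_zero.mpr hxy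
  have h2 : y - z ≠ 0 := sub_ne_zero.mpr hyz
  have h3 : x - z ≠ 0 := sub_ne_zero.mpr hxz
  unfold gG
  field_simp
  ring

lemma I2' {c : ℂ} : ∀ (W : List ℂ) (v : ℂ), Generic c (v :: W) →
    ∑ k : Fin W.length, gG c (W.get k) v * fPl c (W.eraseIdx (k : ℕ)) (W.get k)
      = fPl c W v - 1
  | [], v, _ => by simp [fPl]
  | (w :: W'), v, hgen => by
    obtain ⟨hvX, hgen'⟩ := generic_cons.mp hgen
    obtain ⟨hwW', hW'⟩ := generic_cons.mp hgen'
    have hvw : Ok c v w := hvX w List.mem_cons_self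
    have hvW' : ∀ x ∈ W', Ok c v x := fun x hx => hvX x (List.mem_cons_of_mem _ hx)
    have IHv := I2' W' v (generic_cons.mpr ⟨hvW', hW'⟩)
    have IHw := I2' W' w hgen'
    have hptw : ∀ k : Fin W'.length,
        gG c (W'.get k) v * fPl c (w :: W'.eraseIdx (k : ℕ)) (W'.get k)
        = gG c (W'.get k) v * fPl c (W'.eraseIdx (k : ℕ)) (W'.get k)
          + gG c w v * -(gG c (W'.get k) w * fPl c (W'.eraseIdx (k : ℕ)) (W'.get k))
          + gG c w v * (gG c (W'.get k) v * fPl c (W'.eraseIdx (k : ℕ)) (W'.get k)) := by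
      intro k
      have hz : W'.get k ∈ W' := List.get_mem W' _
      have h1 : Ok c w (W'.get k) := hwW' _ hz
      have h2 : Ok c v (W'.get k) := hvW' _ hz
      have e1 : fPl c (w :: W'.eraseIdx (k : ℕ)) (W'.get k)
          = fF c w (W'.get k) * fPl c (W'.eraseIdx (k : ℕ)) (W'.get k) := by
        simp only [fPl, List.map_cons, List.prod_cons]
      rw [e1, fF_1g h1.1]
      have hgg : gG c w (W'.get k) * gG c (W'.get k) v
          = gG c w v * (gG c w (W'.get k) + gG c (W'.get k) v) :=
        gg_split h1.1 h2.symm'.1 hvw.symm'.1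
      have ha : gG c (W'.get k) w = -gG c w (W'.get k) := gG_anti c w (W'.get k)
      linear_combination (fPl c (W'.eraseIdx (k : ℕ)) (W'.get k)) * hgg
        + (gG c w v * fPl c (W'.eraseIdx (k : ℕ)) (W'.get k)) * ha
    show (∑ k : Fin (W'.length + 1), gG c ((w :: W').get k) v
        * fPl c ((w :: W').eraseIdx (k : ℕ)) ((w :: W').get k)) = _
    rw [Fin.sum_univ_succ]
    simp only [List.get_cons_succ, Fin.val_succ, List.eraseIdx_cons_succ, List.get_cons_zero,
      Fin.val_zero, List.eraseIdx_cons_zero]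
    simp only [show ∀ x : Fin W'.length, (w :: W').get x.succ = W'.get x from fun _ => rfl]
    simp only [hptw]
    simp only [Finset.sum_add_distrib, ← Finset.mul_sum]
    have e2 : (∑ k : Fin W'.length, -(gG c (W'.get k) w
        * fPl c (W'.eraseIdx (k : ℕ)) (W'.get k))) = -(fPl c W' w - 1) := by
      rw [Finset.sum_neg_distrib, IHw]
    rw [IHv, e2]
    have e3 : fPl c (w :: W') v = fF c w v * fPl c W' v := by
      simp only [fPl, List.map_cons, List.prod_cons]
    rw [e3, fF_1g hvw.1.symm]
    ring

lemma I2 {c : ℂ} (W : List ℂ) (u v : ℂ) (hgen : Generic c (u :: v :: W)) :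
    ∑ k : Fin W.length,
        gG c u (W.get k) * gG c (W.get k) v * fPl c (W.eraseIdx (k : ℕ)) (W.get k)
      = gG c u v * (fPl c W v - fPl c W u) := by
  obtain ⟨huX, hgen'⟩ := generic_cons.mp hgen
  obtain ⟨hvW, hW⟩ := generic_cons.mp hgen'
  have huv : Ok c u v := huX v List.mem_cons_self
  have huW : ∀ x ∈ W, Ok c u x := fun x hx => huX x (List.mem_cons_of_mem _ hx)
  have IHv := I2' W v hgen'
  have IHu := I2' W u (generic_cons.mpr ⟨huW, hW⟩)
  have hptw : ∀ k : Fin W.length,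
      gG c u (W.get k) * gG c (W.get k) v * fPl c (W.eraseIdx (k : ℕ)) (W.get k)
      = gG c u v * -(gG c (W.get k) u * fPl c (W.eraseIdx (k : ℕ)) (W.get k))
        + gG c u v * (gG c (W.get k) v * fPl c (W.eraseIdx (k : ℕ)) (W.get k)) := by
    intro k
    have hz : W.get k ∈ W := List.get_mem W _
    have h1 : Ok c u (W.get k) := huW _ hz
    have h2 : Ok c v (W.get k) := hvW _ hz
    have hgg : gG c u (W.get k) * gG c (W.get k) v
        = gG c u v * (gG c u (W.get k) + gG c (W.get k) v) :=
      gg_split h1.1 h2.symm'.1 huv.1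
    have ha : gG c (W.get k) u = -gG c u (W.get k) := gG_anti c u (W.get k)
    linear_combination (fPl c (W.eraseIdx (k : ℕ)) (W.get k)) * hgg
      + (gG c u v * fPl c (W.eraseIdx (k : ℕ)) (W.get k)) * ha
  simp only [hptw]
  simp only [Finset.sum_add_distrib, ← Finset.mul_sum]
  rw [Finset.sum_neg_distrib, IHu, IHv]
  ring

lemma fPl_split {c : ℂ} (hc : c ≠ 0) {L : List ℂ} {z : ℂ} (h : ∀ x ∈ L, x ≠ z) :
    fPl c L z = gPl c L z * hPl c L z := by
  rw [fPl, gPl, hPl, ← prod_map_mul']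
  exact congrArg List.prod (List.map_congr_left fun x hx => fF_gh hc (h x hx))

lemma I0 {c y w z : ℂ} (hc : c ≠ 0) (hwy : w ≠ y) (hyz : y ≠ z) (hwz : w ≠ z) :
    fF c w y * hH c y w * gG c y z + gG c y w * hH c w y * gG c w z
      = gG c y z * gG c w z * hH c w y * hH c z w := by
  have h1 : w - y ≠ 0 := sub_ne_zero.mpr hwy
  have h2 : y - z ≠ 0 := sub_ne_zero.mpr hyz
  have h3 : w - z ≠ 0 := sub_ne_zero.mpr hwz
  have h4 : y - w ≠ 0 := fun hh => h1 (by linear_combination -hh)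
  unfold fF gG hH
  field_simp
  ring

section Op
variable {R : Type*} [Ring R] [Algebra ℂ R] {c : ℂ} {B D : ℂ → R}

lemma Bmul (hc : c ≠ 0) {z : ℂ} {M : List ℂ} (h : ∀ x ∈ M, x - z ≠ -c) (E : R) :
    B z * (TTc c B M * E) = hPl c M z • (TTc c B (z :: M) * E) := by
  rw [← mul_assoc, mul_TTc_cons hc B h, smul_mul_assoc]

lemma MD (hc : c ≠ 0)
    (rBB : ∀ {x y : ℂ}, Ok c x y → hH c x y • (B x * B y) = hH c y x • (B y * B x))
    (rDB : ∀ {v y : ℂ}, y ≠ v → D y * B v = fF c v y • (B v * D y) + gG c y v • (B y * D v)) :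
    ∀ (W : List ℂ) (y : ℂ), Generic c (y :: W) →
    D y * TTc c B W = fPl c W y • (TTc c B W * D y)
      + ∑ k : Fin W.length,
          (gG c y (W.get k) * gPl c (W.eraseIdx (k : ℕ)) (W.get k)
              * hPl c (W.eraseIdx (k : ℕ)) y)
            • (TTc c B (y :: W.eraseIdx (k : ℕ)) * D (W.get k))
  | [], y, _ => by simp [TTc_nil, fPl]
  | (w :: W'), y, hgen => by
    obtain ⟨hyX, hgen'⟩ := generic_cons.mp hgen
    obtain ⟨hwW', hW'⟩ := generic_cons.mp hgen'
    have hyw : Ok c y w := hyX w List.mem_cons_self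
    have hyW' : ∀ x ∈ W', Ok c y x := fun x hx => hyX x (List.mem_cons_of_mem _ hx)
    have hgyW' : Generic c (y :: W') := generic_cons.mpr ⟨hyW', hW'⟩
    have IH1 := MD hc @rBB @rDB W' y hgyW'
    have IH2 := MD hc @rBB @rDB W' w hgen'
    have hPw_ne : hPl c W' w ≠ 0 := hPl_ne_zero hc (fun x hx => (hwW' x hx).symm')
    have hmemW' : ∀ x ∈ W', x - w ≠ -c := fun x hx => (hwW' x hx).symm'.2.2
    have hmemW'y : ∀ x ∈ W', x - y ≠ -c := fun x hx => (hyW' x hx).symm'.2.2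
    have hek : ∀ (k : Fin W'.length) (x : ℂ), x ∈ W'.eraseIdx (k : ℕ) → x ∈ W' :=
      fun k x hx => (List.eraseIdx_sublist W' (k : ℕ)).mem hx
    -- step 1
    have step1 : D y * TTc c B (w :: W')
        = (hPl c W' w)⁻¹ • (fF c w y • (B w * (D y * TTc c B W'))
            + gG c y w • (B y * (D w * TTc c B W'))) := by
      rw [TTc_cons c B w W', mul_smul_comm, ← mul_assoc, rDB hyw.1, add_mul,
        smul_mul_assoc, smul_mul_assoc, mul_assoc, mul_assoc]
    -- step 2
    have step2 : B w * (D y * TTc c B W')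
        = (fPl c W' y * hPl c W' w) • (TTc c B (w :: W') * D y)
          + ∑ k : Fin W'.length,
              ((gG c y (W'.get k) * gPl c (W'.eraseIdx (k : ℕ)) (W'.get k)
                  * hPl c (W'.eraseIdx (k : ℕ)) y)
                * (hH c y w * hPl c (W'.eraseIdx (k : ℕ)) w))
                • (TTc c B (y :: w :: W'.eraseIdx (k : ℕ)) * D (W'.get k)) := by
      rw [IH1, mul_add, Finset.mul_sum]
      congr 1
      · rw [mul_smul_comm, Bmul hc hmemW' (D y), smul_smul]
      · refine Finset.sum_congr rfl fun k _ => ?_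
        have hmem : ∀ x ∈ (y :: W'.eraseIdx (k : ℕ)), x - w ≠ -c := by
          intro x hx
          rcases List.mem_cons.mp hx with rfl | hx'
          · exact hyw.2.2
          · exact hmemW' x (hek k x hx')
        rw [mul_smul_comm, Bmul hc hmem (D (W'.get k)), smul_smul]
        have hswap : TTc c B (w :: y :: W'.eraseIdx (k : ℕ))
            = TTc c B (y :: w :: W'.eraseIdx (k : ℕ)) :=
          TTc_swap hc @rBB hyw.symm'
            (fun x hx => ⟨(hwW' x (hek k x hx)).symm', (hyW' x (hek k x hx)).symm'⟩)
        rw [hswap]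
        congr 1 <;> (try simp only [hPl, List.map_cons, List.prod_cons]) <;> try ring
    -- step 3
    have step3 : B y * (D w * TTc c B W')
        = (fPl c W' w * hPl c W' y) • (TTc c B (y :: W') * D w)
          + ∑ k : Fin W'.length,
              ((gG c w (W'.get k) * gPl c (W'.eraseIdx (k : ℕ)) (W'.get k)
                  * hPl c (W'.eraseIdx (k : ℕ)) w)
                * (hH c w y * hPl c (W'.eraseIdx (k : ℕ)) y))
                • (TTc c B (y :: w :: W'.eraseIdx (k : ℕ)) * D (W'.get k)) := by
      rw [IH2, mul_add, Finset.mul_sum]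
      congr 1
      · rw [mul_smul_comm, Bmul hc hmemW'y (D w), smul_smul]
      · refine Finset.sum_congr rfl fun k _ => ?_
        have hmem : ∀ x ∈ (w :: W'.eraseIdx (k : ℕ)), x - y ≠ -c := by
          intro x hx
          rcases List.mem_cons.mp hx with rfl | hx'
          · exact hyw.symm'.2.2
          · exact hmemW'y x (hek k x hx')
        rw [mul_smul_comm, Bmul hc hmem (D (W'.get k)), smul_smul]
        congr 1 <;> (try simp only [hPl, List.map_cons, List.prod_cons]) <;> try ring
    -- step 4 : RHS expansion
    have step4 : fPl c (w :: W') y • (TTc c B (w :: W') * D y)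
          + ∑ k : Fin (w :: W').length,
              (gG c y ((w :: W').get k) * gPl c ((w :: W').eraseIdx (k : ℕ)) ((w :: W').get k)
                  * hPl c ((w :: W').eraseIdx (k : ℕ)) y)
                • (TTc c B (y :: (w :: W').eraseIdx (k : ℕ)) * D ((w :: W').get k))
        = (fF c w y * fPl c W' y) • (TTc c B (w :: W') * D y)
          + ((gG c y w * gPl c W' w * hPl c W' y) • (TTc c B (y :: W') * D w)
            + ∑ k : Fin W'.length,
                (gG c y (W'.get k) * (gG c w (W'.get k) * gPl c (W'.eraseIdx (k : ℕ)) (W'.get k))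
                    * (hH c w y * hPl c (W'.eraseIdx (k : ℕ)) y))
                  • (TTc c B (y :: w :: W'.eraseIdx (k : ℕ)) * D (W'.get k))) := by
      have hlen : (w :: W').length = W'.length + 1 := rfl
      rw [show (∑ k : Fin (w :: W').length,
              (gG c y ((w :: W').get k) * gPl c ((w :: W').eraseIdx (k : ℕ)) ((w :: W').get k)
                  * hPl c ((w :: W').eraseIdx (k : ℕ)) y)
                • (TTc c B (y :: (w :: W').eraseIdx (k : ℕ)) * D ((w :: W').get k)))
          = ∑ k : Fin (W'.length + 1),
              (gG c y ((w :: W').get k) * gPl c ((w :: W').eraseIdx (k : ℕ)) ((w :: W').get k)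
                  * hPl c ((w :: W').eraseIdx (k : ℕ)) y)
                • (TTc c B (y :: (w :: W').eraseIdx (k : ℕ)) * D ((w :: W').get k)) from rfl,
        Fin.sum_univ_succ]
      refine congrArg₂ (· + ·) ?_ (congrArg₂ (· + ·) ?_ (Finset.sum_congr rfl fun k _ => ?_)) <;>
        (try simp only [List.get_cons_succ, Fin.val_succ, List.eraseIdx_cons_succ]) <;>
        (try (congr 1 <;> (try simp only [fPl, gPl, hPl, List.map_cons, List.prod_cons]) <;> try ring)) <;>
        (try simp) <;> try ring
    -- the sums identity
    have hsum : (∑ k : Fin W'.length,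
          (fF c w y * ((gG c y (W'.get k) * gPl c (W'.eraseIdx (k : ℕ)) (W'.get k)
              * hPl c (W'.eraseIdx (k : ℕ)) y)
            * (hH c y w * hPl c (W'.eraseIdx (k : ℕ)) w)))
            • (TTc c B (y :: w :: W'.eraseIdx (k : ℕ)) * D (W'.get k)))
        + ∑ k : Fin W'.length,
          (gG c y w * ((gG c w (W'.get k) * gPl c (W'.eraseIdx (k : ℕ)) (W'.get k)
              * hPl c (W'.eraseIdx (k : ℕ)) w)
            * (hH c w y * hPl c (W'.eraseIdx (k : ℕ)) y)))
            • (TTc c B (y :: w :: W'.eraseIdx (k : ℕ)) * D (W'.get k))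
        = ∑ k : Fin W'.length,
            (hPl c W' w * (gG c y (W'.get k) * (gG c w (W'.get k)
                  * gPl c (W'.eraseIdx (k : ℕ)) (W'.get k))
               * (hH c w y * hPl c (W'.eraseIdx (k : ℕ)) y)))
              • (TTc c B (y :: w :: W'.eraseIdx (k : ℕ)) * D (W'.get k)) := by
      rw [← Finset.sum_add_distrib]
      refine Finset.sum_congr rfl fun k _ => ?_
      rw [← add_smul]
      congr 1
      have hz : W'.get k ∈ W' := List.get_mem W' _
      have h1 : Ok c y (W'.get k) := hyW' _ hz
      have h2 : Ok c w (W'.get k) := hwW' _ hz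
      have hPwk : hPl c W' w = hH c (W'.get k) w * hPl c (W'.eraseIdx (k : ℕ)) w := by
        rw [hPl, prod_map_eraseIdx (fun x => hH c x w) W' (k : ℕ) k.isLt]; rfl
      rw [hPwk]
      linear_combination (gPl c (W'.eraseIdx (k : ℕ)) (W'.get k)
          * hPl c (W'.eraseIdx (k : ℕ)) y * hPl c (W'.eraseIdx (k : ℕ)) w)
        * I0 hc (c := c) (y := y) (w := w) (z := W'.get k) hyw.1.symm h1.1 h2.1
    -- assemble
    have cY : gG c y w * (fPl c W' w * hPl c W' y)
        = hPl c W' w * (gG c y w * gPl c W' w * hPl c W' y) := by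
      rw [fPl_split hc (fun x hx => (hwW' x hx).symm'.1)]; ring
    rw [step1, step2, step3, inv_smul_eq_iff₀ hPw_ne, step4]
    simp only [smul_add, Finset.smul_sum, smul_smul]
    rw [cY]
    linear_combination (norm := module) hsum
end Op


section Op
variable {R : Type*} [Ring R] [Algebra ℂ R] {c : ℂ} {A B C D : ℂ → R}

lemma BCD (hc : c ≠ 0)
    (rBC : ∀ {v x : ℂ}, v ≠ x → B v * C x = gG c x v • (C v * B x) - fF c x v • (C x * B v))
    {v x : ℂ} (hvx : v ≠ x) {M : List ℂ} (hMx : ∀ m ∈ M, m - x ≠ -c)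
    (hMv : ∀ m ∈ M, m - v ≠ -c) (t : ℂ) :
    B v * (C x * TTc c B M * D t)
      = (gG c x v * hPl c M x) • (C v * TTc c B (x :: M) * D t)
        - (fF c x v * hPl c M v) • (C x * TTc c B (v :: M) * D t) := by
  rw [mul_assoc (C x) (TTc c B M) (D t), ← mul_assoc (B v) (C x) _, rBC hvx, sub_mul,
    smul_mul_assoc, smul_mul_assoc, mul_assoc (C v) (B x) _, mul_assoc (C x) (B v) _,
    Bmul hc hMx (D t), Bmul hc hMv (D t), mul_smul_comm, mul_smul_comm, smul_smul, smul_smul,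
    ← mul_assoc (C v) (TTc c B (x :: M)) (D t), ← mul_assoc (C x) (TTc c B (v :: M)) (D t)]

lemma mainAux (hc : c ≠ 0)
    (rBB : ∀ {x y : ℂ}, Ok c x y → hH c x y • (B x * B y) = hH c y x • (B y * B x))
    (rDB : ∀ {v y : ℂ}, y ≠ v → D y * B v = fF c v y • (B v * D y) + gG c y v • (B y * D v))
    (rAB : ∀ {u v : ℂ}, u ≠ v →
      A u * B v = B v * A u + gG c u v • (C u * D v) - gG c u v • (C v * D u))
    (rBC : ∀ {v x : ℂ}, v ≠ x → B v * C x = gG c x v • (C v * B x) - fF c x v • (C x * B v)) :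
    ∀ (W : List ℂ) (u : ℂ), Generic c (u :: W) →
      A u * TTc c B W - TTc c B W * A u
        = ∑ k : Fin W.length,
            (gG c u (W.get k) * gPl c (W.eraseIdx (k : ℕ)) (W.get k)) •
              (C u * TTc c B (W.eraseIdx (k : ℕ)) * D (W.get k)
                - C (W.get k) * TTc c B (W.eraseIdx (k : ℕ)) * D u)
  | [], u, _ => by simp [TTc_nil]
  | (v :: W), u, hgen => by
    obtain ⟨huX, hgen'⟩ := generic_cons.mp hgen
    obtain ⟨hvW, hW⟩ := generic_cons.mp hgen'
    have huv : Ok c u v := huX v List.mem_cons_self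
    have huW : ∀ x ∈ W, Ok c u x := fun x hx => huX x (List.mem_cons_of_mem _ hx)
    have hgenuW : Generic c (u :: W) := generic_cons.mpr ⟨huW, hW⟩
    have IH := mainAux hc @rBB @rDB @rAB @rBC W u hgenuW
    have MD1 := MD hc @rBB @rDB W v hgen'
    have MD2 := MD hc @rBB @rDB W u hgenuW
    have hP_ne : hPl c W v ≠ 0 := hPl_ne_zero hc fun x hx => (hvW x hx).symm'
    have hekW : ∀ (k : Fin W.length) (x : ℂ), x ∈ W.eraseIdx (k : ℕ) → x ∈ W :=
      fun k x hx => (List.eraseIdx_sublist W (k : ℕ)).mem hx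
    have hMv : ∀ (k : Fin W.length) (x : ℂ), x ∈ W.eraseIdx (k : ℕ) → x - v ≠ -c :=
      fun k x hx => (hvW x (hekW k x hx)).symm'.2.2
    have hMu : ∀ (k : Fin W.length) (x : ℂ), x ∈ W.eraseIdx (k : ℕ) → x - u ≠ -c :=
      fun k x hx => (huW x (hekW k x hx)).symm'.2.2
    have hrotG : ∀ k : Fin W.length, Generic c (W.get k :: W.eraseIdx (k : ℕ)) := by
      intro k
      have := generic_rot W (k : ℕ) k.isLt hW
      rwa [Fin.eta] at this
    have hMz : ∀ (k : Fin W.length) (x : ℂ), x ∈ W.eraseIdx (k : ℕ) → x - W.get k ≠ -c := by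
      intro k x hx
      exact ((generic_cons.mp (hrotG k)).1 x hx).symm'.2.2
    have hrot : ∀ k : Fin W.length,
        TTc c B (W.get k :: W.eraseIdx (k : ℕ)) = TTc c B W := by
      intro k
      have := TTc_rot hc @rBB W (k : ℕ) k.isLt hW
      rwa [Fin.eta] at this
    -- step 1
    have step1 : A u * (B v * TTc c B W) - B v * TTc c B W * A u
        = B v * (A u * TTc c B W - TTc c B W * A u)
          + (gG c u v • (C u * (D v * TTc c B W)) - gG c u v • (C v * (D u * TTc c B W))) := by
      rw [← mul_assoc (A u) (B v) _, rAB huv.1, sub_mul, add_mul, smul_mul_assoc,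
        smul_mul_assoc, mul_assoc (B v) (A u) _, mul_assoc (C u) (D v) _,
        mul_assoc (C v) (D u) _, mul_assoc (B v) (TTc c B W) (A u), mul_sub]
      module
    -- hBv
    have hBv : B v * (A u * TTc c B W - TTc c B W * A u)
        = ∑ k : Fin W.length, (gG c u (W.get k) * gPl c (W.eraseIdx (k : ℕ)) (W.get k)) •
            (((gG c u v * hPl c (W.eraseIdx (k : ℕ)) u)
                • (C v * TTc c B (u :: W.eraseIdx (k : ℕ)) * D (W.get k))
              - (fF c u v * hPl c (W.eraseIdx (k : ℕ)) v)
                • (C u * TTc c B (v :: W.eraseIdx (k : ℕ)) * D (W.get k)))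
            - ((gG c (W.get k) v * hPl c (W.eraseIdx (k : ℕ)) (W.get k))
                • (C v * TTc c B W * D u)
              - (fF c (W.get k) v * hPl c (W.eraseIdx (k : ℕ)) v)
                • (C (W.get k) * TTc c B (v :: W.eraseIdx (k : ℕ)) * D u))) := by
      rw [IH, Finset.mul_sum]
      refine Finset.sum_congr rfl fun k _ => ?_
      rw [mul_smul_comm, mul_sub]
      rw [BCD hc @rBC huv.1.symm (hMu k) (hMv k) (W.get k)]
      rw [BCD hc @rBC (hvW _ (List.get_mem W _)).1 (hMz k) (hMv k) u]
      rw [hrot k]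
    -- step 3 / step 4
    have step3 : C u * (D v * TTc c B W)
        = fPl c W v • (C u * TTc c B W * D v)
          + ∑ k : Fin W.length,
              (gG c v (W.get k) * gPl c (W.eraseIdx (k : ℕ)) (W.get k)
                  * hPl c (W.eraseIdx (k : ℕ)) v)
                • (C u * TTc c B (v :: W.eraseIdx (k : ℕ)) * D (W.get k)) := by
      rw [MD1, mul_add, mul_smul_comm, ← mul_assoc (C u) (TTc c B W) (D v), Finset.mul_sum]
      congr 1
      refine Finset.sum_congr rfl fun k _ => ?_
      rw [mul_smul_comm, ← mul_assoc (C u) _ _]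
    have step4 : C v * (D u * TTc c B W)
        = fPl c W u • (C v * TTc c B W * D u)
          + ∑ k : Fin W.length,
              (gG c u (W.get k) * gPl c (W.eraseIdx (k : ℕ)) (W.get k)
                  * hPl c (W.eraseIdx (k : ℕ)) u)
                • (C v * TTc c B (u :: W.eraseIdx (k : ℕ)) * D (W.get k)) := by
      rw [MD2, mul_add, mul_smul_comm, ← mul_assoc (C v) (TTc c B W) (D u), Finset.mul_sum]
      congr 1
      refine Finset.sum_congr rfl fun k _ => ?_
      rw [mul_smul_comm, ← mul_assoc (C v) _ _]
    -- RHS expansion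
    have hRHS : (∑ k : Fin (v :: W).length,
          (gG c u ((v :: W).get k) * gPl c ((v :: W).eraseIdx (k : ℕ)) ((v :: W).get k)) •
            (C u * TTc c B ((v :: W).eraseIdx (k : ℕ)) * D ((v :: W).get k)
              - C ((v :: W).get k) * TTc c B ((v :: W).eraseIdx (k : ℕ)) * D u))
        = (gG c u v * gPl c W v) • (C u * TTc c B W * D v - C v * TTc c B W * D u)
          + ∑ k : Fin W.length,
              (gG c u (W.get k) * (gG c v (W.get k) * gPl c (W.eraseIdx (k : ℕ)) (W.get k))) •
                (C u * TTc c B (v :: W.eraseIdx (k : ℕ)) * D (W.get k)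
                  - C (W.get k) * TTc c B (v :: W.eraseIdx (k : ℕ)) * D u) := by
      rw [show (∑ k : Fin (v :: W).length,
          (gG c u ((v :: W).get k) * gPl c ((v :: W).eraseIdx (k : ℕ)) ((v :: W).get k)) •
            (C u * TTc c B ((v :: W).eraseIdx (k : ℕ)) * D ((v :: W).get k)
              - C ((v :: W).get k) * TTc c B ((v :: W).eraseIdx (k : ℕ)) * D u))
        = ∑ k : Fin (W.length + 1),
          (gG c u ((v :: W).get k) * gPl c ((v :: W).eraseIdx (k : ℕ)) ((v :: W).get k)) •
            (C u * TTc c B ((v :: W).eraseIdx (k : ℕ)) * D ((v :: W).get k)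
              - C ((v :: W).get k) * TTc c B ((v :: W).eraseIdx (k : ℕ)) * D u) from rfl,
        Fin.sum_univ_succ]
      refine congrArg₂ (· + ·) ?_ (Finset.sum_congr rfl fun k _ => ?_) <;>
        (try simp only [show ∀ x : Fin W.length, (v :: W).get x.succ = W.get x from fun _ => rfl,
          Fin.val_succ, List.eraseIdx_cons_succ]) <;>
        (try (congr 1 <;> (try simp only [gPl, List.map_cons, List.prod_cons]) <;> try ring)) <;>
        (try simp) <;> try ring
    -- scalar facts
    have hPsplit : ∀ k : Fin W.length,
        hPl c W v = hH c (W.get k) v * hPl c (W.eraseIdx (k : ℕ)) v := by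
      intro k
      have := prod_map_eraseIdx (fun x => hH c x v) W (k : ℕ) k.isLt
      rw [Fin.eta] at this
      exact this
    -- the merged sums identity
    have hmerge :
      ((∑ k : Fin W.length, (((gG c u (W.get k) * gPl c (W.eraseIdx (k : ℕ)) (W.get k)) * (gG c u v * hPl c (W.eraseIdx (k : ℕ)) u)) • (C v * TTc c B (u :: W.eraseIdx (k : ℕ)) * D (W.get k)) - ((gG c u (W.get k) * gPl c (W.eraseIdx (k : ℕ)) (W.get k)) * (fF c u v * hPl c (W.eraseIdx (k : ℕ)) v)) • (C u * TTc c B (v :: W.eraseIdx (k : ℕ)) * D (W.get k)) - (((gG c u (W.get k) * gPl c (W.eraseIdx (k : ℕ)) (W.get k)) * (gG c (W.get k) v * hPl c (W.eraseIdx (k : ℕ)) (W.get k))) • (C v * TTc c B W * D u) - ((gG c u (W.get k) * gPl c (W.eraseIdx (k : ℕ)) (W.get k)) * (fF c (W.get k) v * hPl c (W.eraseIdx (k : ℕ)) v)) • (C (W.get k) * TTc c B (v :: W.eraseIdx (k : ℕ)) * D u))))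
        + (∑ k : Fin W.length, ((gG c u v * (gG c v (W.get k) * gPl c (W.eraseIdx (k : ℕ)) (W.get k) * hPl c (W.eraseIdx (k : ℕ)) v)) • (C u * TTc c B (v :: W.eraseIdx (k : ℕ)) * D (W.get k)))))
        - (∑ k : Fin W.length, ((gG c u v * (gG c u (W.get k) * gPl c (W.eraseIdx (k : ℕ)) (W.get k) * hPl c (W.eraseIdx (k : ℕ)) u)) • (C v * TTc c B (u :: W.eraseIdx (k : ℕ)) * D (W.get k))))
      = (∑ k : Fin W.length, ((hPl c W v * (gG c u (W.get k) * (gG c v (W.get k) * gPl c (W.eraseIdx (k : ℕ)) (W.get k)))) • (C u * TTc c B (v :: W.eraseIdx (k : ℕ)) * D (W.get k)) - (hPl c W v * (gG c u (W.get k) * (gG c v (W.get k) * gPl c (W.eraseIdx (k : ℕ)) (W.get k)))) • (C (W.get k) * TTc c B (v :: W.eraseIdx (k : ℕ)) * D u)))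
        + (∑ k : Fin W.length, (-(gG c u (W.get k) * gG c (W.get k) v * fPl c (W.eraseIdx (k : ℕ)) (W.get k)))) • (C v * TTc c B W * D u) := by
      rw [Finset.sum_smul, ← Finset.sum_add_distrib, ← Finset.sum_sub_distrib,
        ← Finset.sum_add_distrib]
      refine Finset.sum_congr rfl fun k _ => ?_
      have hz : W.get k ∈ W := List.get_mem W _
      have h1 : Ok c u (W.get k) := huW _ hz
      have h2 : Ok c v (W.get k) := hvW _ hz
      have hfz : fPl c (W.eraseIdx (k : ℕ)) (W.get k)
          = gPl c (W.eraseIdx (k : ℕ)) (W.get k) * hPl c (W.eraseIdx (k : ℕ)) (W.get k) :=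
        fPl_split hc fun x hx => ((generic_cons.mp (hrotG k)).1 x hx).symm'.1
      have hY : gG c u v * (gG c v (W.get k) * gPl c (W.eraseIdx (k : ℕ)) (W.get k)
            * hPl c (W.eraseIdx (k : ℕ)) v)
          - gG c u (W.get k) * gPl c (W.eraseIdx (k : ℕ)) (W.get k)
            * (fF c u v * hPl c (W.eraseIdx (k : ℕ)) v)
          = hPl c W v * (gG c u (W.get k) * (gG c v (W.get k)
              * gPl c (W.eraseIdx (k : ℕ)) (W.get k))) := by
        rw [hPsplit k]
        linear_combination (gPl c (W.eraseIdx (k : ℕ)) (W.get k)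
            * hPl c (W.eraseIdx (k : ℕ)) v) * I1 (c := c) huv.1 h1.1 h2.1
      have hZ : gG c u (W.get k) * gPl c (W.eraseIdx (k : ℕ)) (W.get k)
            * (fF c (W.get k) v * hPl c (W.eraseIdx (k : ℕ)) v)
          = -(hPl c W v * (gG c u (W.get k) * (gG c v (W.get k)
              * gPl c (W.eraseIdx (k : ℕ)) (W.get k)))) := by
        rw [hPsplit k, fF_gh hc h2.symm'.1, gG_anti c (W.get k) v]
        ring
      have hX : -(gG c u (W.get k) * gPl c (W.eraseIdx (k : ℕ)) (W.get k)
            * (gG c (W.get k) v * hPl c (W.eraseIdx (k : ℕ)) (W.get k)))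
          = -(gG c u (W.get k) * gG c (W.get k) v * fPl c (W.eraseIdx (k : ℕ)) (W.get k)) := by
        rw [hfz]; ring
      linear_combination (norm := module)
        hY • (C u * TTc c B (v :: W.eraseIdx (k : ℕ)) * D (W.get k))
        + hZ • (C (W.get k) * TTc c B (v :: W.eraseIdx (k : ℕ)) * D u)
        + hX • (C v * TTc c B W * D u)
    -- final scalar facts
    have hX1 : gG c u v * fPl c W v = hPl c W v * (gG c u v * gPl c W v) := by
      rw [fPl_split hc fun x hx => (hvW x hx).symm'.1]; ring
    have hX2 : (∑ k : Fin W.length,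
          -(gG c u (W.get k) * gG c (W.get k) v * fPl c (W.eraseIdx (k : ℕ)) (W.get k)))
          - gG c u v * fPl c W u
        = -(hPl c W v * (gG c u v * gPl c W v)) := by
      have e := I2 W u v hgen
      have e2 : (∑ k : Fin W.length,
          -(gG c u (W.get k) * gG c (W.get k) v * fPl c (W.eraseIdx (k : ℕ)) (W.get k)))
          = -(gG c u v * (fPl c W v - fPl c W u)) := by
        rw [← e, ← Finset.sum_neg_distrib]
      rw [e2, fPl_split hc fun x hx => (hvW x hx).symm'.1]
      ring
    -- assemble
    rw [TTc_cons c B v W, mul_smul_comm, smul_mul_assoc, ← smul_sub, inv_smul_eq_iff₀ hP_ne,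
      hRHS, step1, hBv, step3, step4]
    simp only [smul_add, smul_sub, smul_smul, Finset.smul_sum]
    linear_combination (norm := module) hmerge
      + hX1 • (C u * TTc c B W * D v)
      + hX2 • (C v * TTc c B W * D u)
end Op
lemma eraseIdx_map {α β : Type*} (f : α → β) : ∀ (L : List α) (k : ℕ),
    (L.map f).eraseIdx k = (L.eraseIdx k).map f
  | [], _ => by simp
  | (a :: L), 0 => by simp
  | (a :: L), (k+1) => by
      simp only [List.map_cons, List.eraseIdx_cons_succ]
      rw [eraseIdx_map f L k]

lemma sort_univ_erase (n : ℕ) (k : Fin n) :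
    (Finset.univ.erase k).sort (· ≤ ·) = (List.finRange n).eraseIdx (k : ℕ) := by
  have hperm : List.Perm ((Finset.univ.erase k).sort (· ≤ ·)) ((List.finRange n).eraseIdx (k : ℕ)) := by
    rw [List.perm_ext_iff_of_nodup (Finset.sort_nodup _ _)
      ((List.nodup_finRange n).sublist (List.eraseIdx_sublist _ _))]
    intro a
    rw [Finset.mem_sort, Finset.mem_erase, List.mem_eraseIdx_iff_getElem]
    constructor
    · rintro ⟨hne, -⟩
      exact ⟨(a : ℕ), by simpa using a.isLt, by simpa using fun h => hne (Fin.ext h), by simp⟩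
    · rintro ⟨i, h, hne, rfl⟩
      refine ⟨fun hh => hne ?_, Finset.mem_univ _⟩
      simpa using congrArg Fin.val hh
  have hs2 : List.Pairwise (· ≤ ·) ((List.finRange n).eraseIdx (k : ℕ)) :=
    List.Pairwise.imp le_of_lt
      ((List.pairwise_lt_finRange n).sublist (List.eraseIdx_sublist _ _))
  exact List.Perm.eq_of_pairwise' (Finset.pairwise_sort _ _) hs2 hperm

lemma subL_erase (V : List ℂ) (k : Fin V.length) :
    subL V (Finset.univ.erase k) = V.eraseIdx (k : ℕ) := by
  rw [subL, sort_univ_erase, ← eraseIdx_map, List.map_get_finRange]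

lemma pF_single (F : ℂ → ℂ → ℂ) (U : List ℂ) (z : ℂ) :
    pF F U [z] = (U.map fun x => F x z).prod := by
  simp [pF]


end S18

/-- eq. (6.1)/(6.14):
`[T_{12}(u), 𝕋_{23}(v̄)] = Σ_k g(u,v_k)·g(v̄_k,v_k)·(T_{13}(u)·𝕋_{23}(v̄_k)·T_{22}(v_k)
− T_{13}(v_k)·𝕋_{23}(v̄_k)·T_{22}(u))`, where `v̄_k = v̄ ∖ {v_k}`.
(Indices `0,1,2 : Fin 3` encode the matrix indices `1,2,3`.) -/
theorem stmt18 {R : Type*} [Ring R] [Algebra ℂ R] (c : ℂ) (hc : c ≠ 0)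
    (T : Fin 3 → Fin 3 → ℂ → R) (hT : RTTrel c T)
    (b : ℕ) (u : ℂ) (V : List ℂ) (hV : V.length = b)
    (hgen : Generic c (u :: V)) :
    T 0 1 u * TTc c (T 1 2) V - TTc c (T 1 2) V * T 0 1 u
      = ∑ k : Fin V.length,
          (gG c u (V.get k) * pF (gG c) (subL V (Finset.univ.erase k)) [V.get k]) •
          (T 0 2 u * TTc c (T 1 2) (subL V (Finset.univ.erase k)) * T 1 1 (V.get k)
            - T 0 2 (V.get k) * TTc c (T 1 2) (subL V (Finset.univ.erase k)) * T 1 1 u) := by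
  have rBB' : ∀ {x y : ℂ}, S18.Ok c x y →
      hH c x y • (T 1 2 x * T 1 2 y) = hH c y x • (T 1 2 y * T 1 2 x) :=
    fun h => S18.relBB hT hc h.1
  have rDB' : ∀ {v y : ℂ}, y ≠ v → T 1 1 y * T 1 2 v
      = fF c v y • (T 1 2 v * T 1 1 y) + gG c y v • (T 1 2 y * T 1 1 v) :=
    fun h => S18.relDB hT (Ne.symm h)
  have rAB' : ∀ {u v : ℂ}, u ≠ v → T 0 1 u * T 1 2 v
      = T 1 2 v * T 0 1 u + gG c u v • (T 0 2 u * T 1 1 v) - gG c u v • (T 0 2 v * T 1 1 u) :=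
    fun h => S18.relAB hT h
  have rBC' : ∀ {v x : ℂ}, v ≠ x → T 1 2 v * T 0 2 x
      = gG c x v • (T 0 2 v * T 1 2 x) - fF c x v • (T 0 2 x * T 1 2 v) :=
    fun h => S18.relBC hT h
  rw [S18.mainAux hc rBB' rDB' rAB' rBC' V u hgen]
  refine Finset.sum_congr rfl fun k _ => ?_
  rw [S18.subL_erase, S18.pF_single]
  rfl
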